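/- Let (V₁,U,V₂) be a node cutset separation of a graph G = (V,E), let G₁ = G[V₁∪U], G₂ = G[V₂∪U], and let ℒ₁, ℒ₂ be collections of cliques of G₁, G₂ respectively. Then a vector x ∈ ℝ^{V ∪ R_U} lies in STAB(G(U), ℒ₁∪ℒ₂∪ℒ(U)) if and only if its restriction to G₁(U) lies in STAB(G₁(U), ℒ₁∪ℒ(U)) and its restriction to G₂(U) lies in STAB(G₂(U), ℒ₂∪ℒ(U)). -/

import Mathlib

open Finset
open scoped Classical

variable {V : Type*} [Fintype V] [DecidableEq V]

/-- A stable (independent) set. -/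
def IsStable {W : Type*} (G : SimpleGraph W) (S : Finset W) : Prop :=
  ∀ a ∈ S, ∀ b ∈ S, ¬ G.Adj a b

/-- The record indices: stable subsets of `U`. -/
def RecT (G : SimpleGraph V) (U : Finset V) : Type _ :=
  {T : Finset V // T ⊆ U ∧ IsStable G T}

noncomputable instance (G : SimpleGraph V) (U : Finset V) : Fintype (RecT G U) := by
  unfold RecT; infer_instance

instance (G : SimpleGraph V) (U : Finset V) : DecidableEq (RecT G U) := by
  unfold RecT; infer_instance

/-- The record graph `G(U)`: `G` plus a clique of record vertices `r_T`, one for each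
stable `T ⊆ U`, with `r_T` adjacent exactly to `U \ T` among original vertices. -/
noncomputable def recordGraph (G : SimpleGraph V) (U : Finset V) :
    SimpleGraph (V ⊕ RecT G U) :=
  SimpleGraph.fromRel (fun x y =>
    match x, y with
    | Sum.inl a, Sum.inl b => G.Adj a b
    | Sum.inl a, Sum.inr T => a ∈ U ∧ a ∉ T.1
    | Sum.inr T, Sum.inl a => a ∈ U ∧ a ∉ T.1
    | Sum.inr _, Sum.inr _ => True)

/-- The collection `ℒ(U)` of cliques of `G(U)`: the record clique together with, for
each `v ∈ U`, the clique `{v} ∪ {r_T : v ∉ T}`. -/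
noncomputable def recordCliques (G : SimpleGraph V) (U : Finset V) :
    Set (Finset (V ⊕ RecT G U)) :=
  {(Finset.univ : Finset (RecT G U)).image Sum.inr} ∪
    {L | ∃ v ∈ U, L = insert (Sum.inl v)
      ((Finset.univ.filter (fun T : RecT G U => v ∉ T.1)).image Sum.inr)}

/-- The stable set polytope. -/
noncomputable def stab {W : Type*} [Fintype W] (G : SimpleGraph W) : Set (W → ℝ) :=
  convexHull ℝ {x | ∃ S : Finset W, IsStable G S ∧
    x = fun w => if w ∈ S then (1 : ℝ) else 0}

/-- The polytope `STAB(G, ℒ)`: convex hull of the stable sets meeting all cliques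
of `ℒ`. -/
noncomputable def stabL {W : Type*} [Fintype W] (G : SimpleGraph W)
    (ℒ : Set (Finset W)) : Set (W → ℝ) :=
  convexHull ℝ {x | ∃ S : Finset W, IsStable G S ∧ (∀ L ∈ ℒ, (S ∩ L).Nonempty) ∧
    x = fun w => if w ∈ S then (1 : ℝ) else 0}


/-- `x` restricted to the vertex subset `W₁` lies in the polytope
`STAB(H[W₁], ℒ)` (convex hull of stable sets of the induced subgraph meeting every
clique of `ℒ`). -/
noncomputable def MemStabOn {W : Type*} [Fintype W] [DecidableEq W]
    (H : SimpleGraph W) (W₁ : Finset W) (ℒ : Set (Finset W)) (x : W → ℝ) : Prop :=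
  (fun w : {w // w ∈ W₁} => x w.1) ∈
    convexHull ℝ {z : {w // w ∈ W₁} → ℝ | ∃ S : Finset W, S ⊆ W₁ ∧ IsStable H S ∧
      (∀ L ∈ ℒ, (S ∩ L).Nonempty) ∧ z = fun w => if w.1 ∈ S then (1 : ℝ) else 0}


set_option linter.unusedSectionVars false
set_option maxHeartbeats 1000000

lemma comb_mem_convexHull {ι : Type*} {E : Type*} [AddCommGroup E] [Module ℝ E]
    (t : Finset ι) (w : ι → ℝ) (f : ι → E) (s : Set E)
    (h0 : ∀ i ∈ t, 0 ≤ w i) (h1 : ∑ i ∈ t, w i = 1)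
    (hmem : ∀ i ∈ t, w i ≠ 0 → f i ∈ s) :
    (∑ i ∈ t, w i • f i) ∈ convexHull ℝ s := by
  classical
  set t' := t.filter (fun i => w i ≠ 0) with ht'
  have hsum : ∑ i ∈ t', w i = 1 := by rw [ht', Finset.sum_filter_ne_zero]; exact h1
  have heq : (∑ i ∈ t, w i • f i) = ∑ i ∈ t', w i • f i := by
    rw [ht', Finset.sum_filter_of_ne]
    intro i _ h hw
    exact h (by rw [hw, zero_smul])
  rw [heq, ← Finset.centerMass_eq_of_sum_1 _ _ hsum]
  exact Finset.centerMass_mem_convexHull _ (fun i hi => h0 i (Finset.mem_filter.1 hi).1)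
    (by rw [hsum]; norm_num)
    (fun i hi => hmem i (Finset.mem_filter.1 hi).1 (Finset.mem_filter.1 hi).2)

lemma mem_convexHull_image_iff {α E : Type*} [Fintype α] [AddCommGroup E] [Module ℝ E]
    (P : α → Prop) (f : α → E)
    (hf : ∀ a b, P a → P b → f a = f b → a = b) (x : E) :
    x ∈ convexHull ℝ {z : E | ∃ a, P a ∧ z = f a} ↔
      ∃ μ : α → ℝ, (∀ a, 0 ≤ μ a) ∧ (∀ a, μ a ≠ 0 → P a) ∧
        (∑ a, μ a) = 1 ∧ x = ∑ a, μ a • f a := by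
  classical
  constructor
  · intro hx
    have hset : {z : E | ∃ a, P a ∧ z = f a} = ↑((Finset.univ.filter P).image f) := by
      ext z
      simp only [Set.mem_setOf_eq, Finset.coe_image, Set.mem_image, Finset.mem_coe,
        Finset.mem_filter, Finset.mem_univ, true_and]
      constructor
      · rintro ⟨a, hPa, rfl⟩; exact ⟨a, hPa, rfl⟩
      · rintro ⟨a, hPa, rfl⟩; exact ⟨a, hPa, rfl⟩
    rw [hset, Finset.mem_convexHull] at hx
    obtain ⟨w, hw0, hw1, hwx⟩ := hx
    have hinj : ∀ a ∈ Finset.univ.filter P, ∀ b ∈ Finset.univ.filter P, f a = f b → a = b := by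
      intro a ha b hb hab
      exact hf a b (Finset.mem_filter.1 ha).2 (Finset.mem_filter.1 hb).2 hab
    refine ⟨fun a => if P a then w (f a) else 0, ?_, ?_, ?_, ?_⟩
    · intro a
      by_cases hPa : P a
      · simp only [hPa, if_true]
        exact hw0 _ (Finset.mem_image.2 ⟨a, Finset.mem_filter.2 ⟨Finset.mem_univ a, hPa⟩, rfl⟩)
      · simp [hPa]
    · intro a ha
      by_cases hPa : P a
      · exact hPa
      · simp [hPa] at ha
    · rw [← hw1, Finset.sum_image hinj]
      rw [← Finset.sum_filter_of_ne (s := Finset.univ) (p := P)]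
      · apply Finset.sum_congr rfl
        intro a ha
        simp [(Finset.mem_filter.1 ha).2]
      · intro a _ h
        by_contra hPa
        simp [hPa] at h
    · rw [← hwx, Finset.centerMass_eq_of_sum_1 _ _ hw1, Finset.sum_image hinj]
      rw [← Finset.sum_filter_of_ne (s := Finset.univ) (p := P)]
      · apply Finset.sum_congr rfl
        intro a ha
        simp [(Finset.mem_filter.1 ha).2]
      · intro a _ h
        by_contra hPa
        simp [hPa, zero_smul] at h
  · rintro ⟨μ, h0, hP, h1, rfl⟩
    exact comb_mem_convexHull Finset.univ μ f _ (fun i _ => h0 i) h1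
      (fun i _ hi => ⟨i, hP i hi, rfl⟩)

lemma stabL_mem_iff {W : Type*} [Fintype W] [DecidableEq W] (H : SimpleGraph W)
    (ℒ : Set (Finset W)) (x : W → ℝ) :
    x ∈ stabL H ℒ ↔ ∃ μ : Finset W → ℝ, (∀ S, 0 ≤ μ S) ∧
      (∀ S, μ S ≠ 0 → IsStable H S ∧ ∀ L ∈ ℒ, (S ∩ L).Nonempty) ∧
      (∑ S, μ S) = 1 ∧
      ∀ w, x w = ∑ S : Finset W, μ S * (if w ∈ S then (1:ℝ) else 0) := by
  have hite : ∀ (S : Finset W) (w : W),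
      (@ite ℝ (w ∈ S) (Classical.propDecidable _) 1 0) = (if w ∈ S then (1:ℝ) else 0) :=
    fun S w => by by_cases h : w ∈ S <;> simp [h]
  have hEq : stabL H ℒ = convexHull ℝ {z : W → ℝ | ∃ S : Finset W,
      (IsStable H S ∧ ∀ L ∈ ℒ, (S ∩ L).Nonempty) ∧
      z = fun w => @ite ℝ (w ∈ S) (Classical.propDecidable _) 1 0} := by
    unfold stabL
    congr 1
    ext z
    have hint : ∀ (inst : DecidableEq W) (S L : Finset W),
        (@Inter.inter _ (@Finset.instInter W inst) S L).Nonempty ↔ ∃ a, a ∈ S ∧ a ∈ L := by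
      intro inst S L
      constructor
      · rintro ⟨a, ha⟩
        rw [@Finset.mem_inter] at ha
        exact ⟨a, ha⟩
      · rintro ⟨a, ha⟩
        exact ⟨a, (@Finset.mem_inter _ inst _ _ _).2 ha⟩
    constructor
    · rintro ⟨S, h1, h2, h3⟩
      exact ⟨S, ⟨h1, fun L hL => (hint _ S L).2 ((hint _ S L).1 (h2 L hL))⟩,
        by rw [h3]; funext w; by_cases h : w ∈ S <;> simp [h]⟩
    · rintro ⟨S, ⟨h1, h2⟩, h3⟩
      exact ⟨S, h1, fun L hL => (hint _ S L).2 ((hint _ S L).1 (h2 L hL)),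
        by rw [h3]; funext w; by_cases h : w ∈ S <;> simp [h]⟩
  rw [hEq, mem_convexHull_image_iff
    (fun S : Finset W => IsStable H S ∧ ∀ L ∈ ℒ, (S ∩ L).Nonempty)
    (fun S => fun w => @ite ℝ (w ∈ S) (Classical.propDecidable _) 1 0) ?_ x]
  · constructor
    · rintro ⟨μ, h0, h1, h2, h3⟩
      refine ⟨μ, h0, h1, h2, fun w => ?_⟩
      rw [h3]
      simp [Finset.sum_apply, hite, mul_comm]
    · rintro ⟨μ, h0, h1, h2, h3⟩
      refine ⟨μ, h0, h1, h2, ?_⟩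
      funext w
      rw [h3 w]
      simp [Finset.sum_apply, hite, mul_comm]
  · intro a b _ _ hab
    ext w
    have := congrFun hab w
    by_cases haw : w ∈ a <;> by_cases hbw : w ∈ b <;> simp_all

lemma memStabOn_iff {W : Type*} [Fintype W] [DecidableEq W] (H : SimpleGraph W)
    (W₁ : Finset W) (ℒ : Set (Finset W)) (x : W → ℝ) :
    MemStabOn H W₁ ℒ x ↔ ∃ μ : Finset W → ℝ, (∀ S, 0 ≤ μ S) ∧
      (∀ S, μ S ≠ 0 → S ⊆ W₁ ∧ IsStable H S ∧ ∀ L ∈ ℒ, (S ∩ L).Nonempty) ∧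
      (∑ S, μ S) = 1 ∧
      ∀ w ∈ W₁, x w = ∑ S : Finset W, μ S * (if w ∈ S then (1:ℝ) else 0) := by
  have hset : {z : {w // w ∈ W₁} → ℝ | ∃ S : Finset W, S ⊆ W₁ ∧ IsStable H S ∧
      (∀ L ∈ ℒ, (S ∩ L).Nonempty) ∧ z = fun w => if w.1 ∈ S then (1 : ℝ) else 0} =
      {z : {w // w ∈ W₁} → ℝ | ∃ S : Finset W,
      (S ⊆ W₁ ∧ IsStable H S ∧ ∀ L ∈ ℒ, (S ∩ L).Nonempty) ∧
      z = fun w => if w.1 ∈ S then (1 : ℝ) else 0} := by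
    ext z
    constructor
    · rintro ⟨S, h1, h2, h3, h4⟩; exact ⟨S, ⟨h1, h2, h3⟩, h4⟩
    · rintro ⟨S, ⟨h1, h2, h3⟩, h4⟩; exact ⟨S, h1, h2, h3, h4⟩
  rw [MemStabOn, hset, mem_convexHull_image_iff
    (fun S : Finset W => S ⊆ W₁ ∧ IsStable H S ∧ ∀ L ∈ ℒ, (S ∩ L).Nonempty)
    (fun S => fun w : {w // w ∈ W₁} => if w.1 ∈ S then (1:ℝ) else 0) ?_ _]
  · constructor
    · rintro ⟨μ, h0, h1, h2, h3⟩
      refine ⟨μ, h0, h1, h2, fun w hw => ?_⟩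
      have := congrFun h3 ⟨w, hw⟩
      simpa [Finset.sum_apply, mul_comm] using this
    · rintro ⟨μ, h0, h1, h2, h3⟩
      refine ⟨μ, h0, h1, h2, ?_⟩
      funext w
      have := h3 w.1 w.2
      simpa [Finset.sum_apply, mul_comm] using this
  · intro a b ha hb hab
    ext w
    have hmem : ∀ u, u ∈ a ∨ u ∈ b → u ∈ W₁ := by
      rintro u (hu | hu)
      · exact ha.1 hu
      · exact hb.1 hu
    constructor
    · intro hwa
      have := congrFun hab ⟨w, hmem w (Or.inl hwa)⟩
      by_cases hwb : w ∈ b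
      · exact hwb
      · simp [hwa, hwb] at this
    · intro hwb
      have := congrFun hab ⟨w, hmem w (Or.inr hwb)⟩
      by_cases hwa : w ∈ a
      · exact hwa
      · simp [hwa, hwb] at this

lemma glue_calc {κ ι₁ ι₂ : Type*} [Fintype κ] [Fintype ι₁] [Fintype ι₂]
    (A : κ → ι₁ → ℝ) (B : κ → ι₂ → ℝ) (e : κ → ℝ)
    (hBe : ∀ k, ∑ j, B k j = e k)
    (hA0 : ∀ k, e k = 0 → ∀ i, A k i = 0) :
    ∑ k, ∑ i, ∑ j, A k i * B k j / e k = ∑ k, ∑ i, A k i := by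
  refine Finset.sum_congr rfl (fun k _ => ?_)
  by_cases hk : e k = 0
  · simp [hA0 k hk]
  · have h1 : (∑ i, A k i) * (∑ j, B k j) / e k = ∑ i, ∑ j, A k i * B k j / e k := by
      rw [Finset.sum_mul_sum, Finset.sum_div]
      exact Finset.sum_congr rfl (fun i _ => Finset.sum_div _ _ _)
    rw [← h1, hBe, mul_div_assoc, div_self hk, mul_one]

lemma glue_coord {κ ι₁ ι₂ : Type*} [Fintype κ] [Fintype ι₁] [Fintype ι₂]
    (a : κ → ι₁ → ℝ) (b : κ → ι₂ → ℝ) (e : κ → ℝ) (μ : ι₁ → ℝ) (r : ℝ) (g : ι₁ → ℝ)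
    (hbe : ∀ k, ∑ j, b k j = e k)
    (hae : ∀ k, e k = 0 → ∀ i, a k i = 0)
    (hga : ∀ i, ∑ k, a k i * g i = μ i * g i)
    (hxr : ∑ i, μ i * g i = r) :
    ∑ k, ∑ i, ∑ j, a k i * b k j / e k * g i = r := by
  have h1 : ∀ k, ∀ i, ∀ j : ι₂, a k i * b k j / e k * g i = (a k i * g i) * b k j / e k := by
    intros; ring
  calc ∑ k, ∑ i, ∑ j, a k i * b k j / e k * g i
      = ∑ k, ∑ i, ∑ j, (a k i * g i) * b k j / e k := by
        refine Finset.sum_congr rfl fun k _ => Finset.sum_congr rfl fun i _ =>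
          Finset.sum_congr rfl fun j _ => h1 k i j
    _ = ∑ k, ∑ i, a k i * g i :=
        glue_calc (fun k i => a k i * g i) b e hbe (fun k hk i => by rw [hae k hk i, zero_mul])
    _ = ∑ i, ∑ k, a k i * g i := Finset.sum_comm
    _ = ∑ i, μ i * g i := Finset.sum_congr rfl fun i _ => hga i
    _ = r := hxr

lemma finset_inter_nonempty_iff {W : Type*} (inst : DecidableEq W) (S L : Finset W) :
    (@Inter.inter _ (@Finset.instInter W inst) S L).Nonempty ↔ ∃ a, a ∈ S ∧ a ∈ L := by
  constructor
  · rintro ⟨c, hc⟩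
    rw [@Finset.mem_inter] at hc
    exact ⟨c, hc⟩
  · rintro ⟨c, hc⟩
    exact ⟨c, (@Finset.mem_inter _ inst _ _ _).2 hc⟩


variable {G : SimpleGraph V} {U : Finset V}

lemma adj_inl_inl {a b : V} :
    (recordGraph G U).Adj (Sum.inl a) (Sum.inl b) ↔ G.Adj a b := by
  simp only [recordGraph, SimpleGraph.fromRel_adj, ne_eq, Sum.inl.injEq]
  constructor
  · rintro ⟨h, h1 | h1⟩
    · exact h1
    · exact h1.symm
  · intro h
    exact ⟨fun he => G.irrefl (he ▸ h), Or.inl h⟩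

lemma adj_inl_inr {a : V} {T : RecT G U} :
    (recordGraph G U).Adj (Sum.inl a) (Sum.inr T) ↔ a ∈ U ∧ a ∉ T.1 := by
  simp only [recordGraph, SimpleGraph.fromRel_adj, ne_eq]
  constructor
  · rintro ⟨h, h1 | h1⟩ <;> exact h1
  · intro h
    exact ⟨fun he => by simp at he, Or.inl h⟩

lemma adj_inr_inr {T T' : RecT G U} :
    (recordGraph G U).Adj (Sum.inr T) (Sum.inr T') ↔ T ≠ T' := by
  simp only [recordGraph, SimpleGraph.fromRel_adj, ne_eq, Sum.inr.injEq]
  tauto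

/-- Structure of a stable set meeting all record cliques: it contains a unique record
vertex `r_T`, and its trace on `U` is exactly `T`. -/
lemma good_structure (S : Finset (V ⊕ RecT G U))
    (hS : IsStable (recordGraph G U) S)
    (hmeet : ∀ L ∈ recordCliques G U, (S ∩ L).Nonempty) :
    ∃ T : RecT G U, Sum.inr T ∈ S ∧ (∀ T' : RecT G U, Sum.inr T' ∈ S → T' = T) ∧
      ∀ v ∈ U, (Sum.inl v ∈ S ↔ v ∈ T.1) := by
  have hrec : ((Finset.univ : Finset (RecT G U)).image Sum.inr) ∈ recordCliques G U :=
    Or.inl rfl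
  obtain ⟨a, ha⟩ := hmeet _ hrec
  rw [Finset.mem_inter, Finset.mem_image] at ha
  obtain ⟨haS, T, -, rfl⟩ := ha
  have huniq : ∀ T' : RecT G U, Sum.inr T' ∈ S → T' = T := by
    intro T' hT'
    by_contra hne
    exact hS _ hT' _ haS (adj_inr_inr.2 hne)
  refine ⟨T, haS, huniq, fun v hv => ?_⟩
  constructor
  · intro hvS
    by_contra hvT
    exact hS _ hvS _ haS (adj_inl_inr.2 ⟨hv, hvT⟩)
  · intro hvT
    obtain ⟨b, hb⟩ := hmeet _ (Or.inr ⟨v, hv, rfl⟩)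
    rw [Finset.mem_inter, Finset.mem_insert] at hb
    rcases hb.2 with hb2 | hb2
    · exact hb2 ▸ hb.1
    · exfalso
      rw [Finset.mem_image] at hb2
      obtain ⟨T', hT', rfl⟩ := hb2
      rw [Finset.mem_filter] at hT'
      exact hT'.2 (huniq T' hb.1 ▸ hvT)



lemma forward_side (G : SimpleGraph V) (U A : Finset V)
    (ℒ ℒ' : Set (Finset (V ⊕ RecT G U))) (hsub : ℒ ⊆ ℒ')
    (hLA : ∀ L ∈ ℒ, L ⊆ A.image Sum.inl) (hUA : U ⊆ A)
    (x : (V ⊕ RecT G U) → ℝ)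
    (hx : x ∈ stabL (recordGraph G U) (ℒ' ∪ recordCliques G U)) :
    MemStabOn (recordGraph G U)
      (A.image Sum.inl ∪ (Finset.univ : Finset (RecT G U)).image Sum.inr)
      (ℒ ∪ recordCliques G U) x := by
  classical
  rw [stabL_mem_iff] at hx
  obtain ⟨μ, hμ0, hμg, hμ1, hμx⟩ := hx
  rw [memStabOn_iff]
  set Wa : Finset (V ⊕ RecT G U) :=
    A.image Sum.inl ∪ (Finset.univ : Finset (RecT G U)).image Sum.inr with hWa
  have hLW : ∀ L ∈ ℒ ∪ recordCliques G U, L ⊆ Wa := by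
    intro L hL
    rcases hL with hL | hL
    · exact (hLA L hL).trans Finset.subset_union_left
    · rw [recordCliques, Set.mem_union] at hL
      rcases hL with hL | hL
      · rw [Set.mem_singleton_iff] at hL
        subst hL
        exact Finset.subset_union_right
      · obtain ⟨v, hv, rfl⟩ := hL
        refine Finset.insert_subset ?_ ?_
        · exact Finset.mem_union_left _ (Finset.mem_image_of_mem _ (hUA hv))
        · exact (Finset.image_subset_image (Finset.subset_univ _)).trans
            Finset.subset_union_right
  refine ⟨fun S' => ∑ S ∈ Finset.univ.filter (fun S => S ∩ Wa = S'), μ S, ?_, ?_, ?_, ?_⟩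
  · intro S'
    exact Finset.sum_nonneg fun S _ => hμ0 S
  · intro S' hS'
    obtain ⟨S, hSf, hSne⟩ := Finset.exists_ne_zero_of_sum_ne_zero hS'
    have hfib : S ∩ Wa = S' := (Finset.mem_filter.1 hSf).2
    obtain ⟨hst, hme⟩ := hμg S hSne
    subst hfib
    refine ⟨Finset.inter_subset_right, ?_, ?_⟩
    · intro c hc d hd
      exact hst c (Finset.mem_inter.1 hc).1 d (Finset.mem_inter.1 hd).1
    · intro L hL
      have hL' : L ∈ ℒ' ∪ recordCliques G U := by
        rcases hL with h | h
        · exact Or.inl (hsub h)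
        · exact Or.inr h
      obtain ⟨c, hc⟩ := hme L hL'
      rw [Finset.mem_inter] at hc
      exact ⟨c, Finset.mem_inter.2 ⟨Finset.mem_inter.2 ⟨hc.1, hLW L hL hc.2⟩, hc.2⟩⟩
  · rw [Finset.sum_fiberwise_of_maps_to (fun S _ => Finset.mem_univ (S ∩ Wa)) μ]
    exact hμ1
  · intro w hw
    rw [hμx w,
      ← Finset.sum_fiberwise_of_maps_to (fun S _ => Finset.mem_univ (S ∩ Wa))
        (fun S => μ S * (if w ∈ S then (1:ℝ) else 0))]
    refine Finset.sum_congr rfl fun S' _ => ?_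
    rw [Finset.sum_mul]
    refine Finset.sum_congr rfl fun S hS => ?_
    rw [← (Finset.mem_filter.1 hS).2]
    congr 1
    by_cases hws : w ∈ S <;> simp [Finset.mem_inter, hws, hw]

lemma backward_glue (G : SimpleGraph V) (V₁ U V₂ : Finset V)
    (hpart : V₁ ∪ U ∪ V₂ = Finset.univ)
    (hd₁ : Disjoint V₁ U) (hd₂ : Disjoint V₁ V₂) (hd₃ : Disjoint U V₂)
    (hnonadj : ∀ a ∈ V₁, ∀ b ∈ V₂, ¬ G.Adj a b)
    (ℒ₁ ℒ₂ : Set (Finset (V ⊕ RecT G U)))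
    (x : (V ⊕ RecT G U) → ℝ)
    (μ₁ μ₂ : Finset (V ⊕ RecT G U) → ℝ)
    (hμ₁0 : ∀ S, 0 ≤ μ₁ S) (hμ₂0 : ∀ S, 0 ≤ μ₂ S)
    (hμ₁g : ∀ S, μ₁ S ≠ 0 →
      S ⊆ (V₁ ∪ U).image Sum.inl ∪ (Finset.univ : Finset (RecT G U)).image Sum.inr ∧
      IsStable (recordGraph G U) S ∧ ∀ L ∈ ℒ₁ ∪ recordCliques G U, (S ∩ L).Nonempty)
    (hμ₂g : ∀ S, μ₂ S ≠ 0 →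
      S ⊆ (V₂ ∪ U).image Sum.inl ∪ (Finset.univ : Finset (RecT G U)).image Sum.inr ∧
      IsStable (recordGraph G U) S ∧ ∀ L ∈ ℒ₂ ∪ recordCliques G U, (S ∩ L).Nonempty)
    (hμ₁1 : (∑ S, μ₁ S) = 1) (hμ₂1 : (∑ S, μ₂ S) = 1)
    (hμ₁x : ∀ w ∈ (V₁ ∪ U).image Sum.inl ∪ (Finset.univ : Finset (RecT G U)).image Sum.inr,
      x w = ∑ S : Finset (V ⊕ RecT G U), μ₁ S * (if w ∈ S then (1:ℝ) else 0))
    (hμ₂x : ∀ w ∈ (V₂ ∪ U).image Sum.inl ∪ (Finset.univ : Finset (RecT G U)).image Sum.inr,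
      x w = ∑ S : Finset (V ⊕ RecT G U), μ₂ S * (if w ∈ S then (1:ℝ) else 0)) :
    x ∈ stabL (recordGraph G U) (ℒ₁ ∪ ℒ₂ ∪ recordCliques G U) := by
  classical
  set W1s : Finset (V ⊕ RecT G U) :=
    (V₁ ∪ U).image Sum.inl ∪ (Finset.univ : Finset (RecT G U)).image Sum.inr with hW1s
  set W2s : Finset (V ⊕ RecT G U) :=
    (V₂ ∪ U).image Sum.inl ∪ (Finset.univ : Finset (RecT G U)).image Sum.inr with hW2s
  set a : RecT G U → Finset (V ⊕ RecT G U) → ℝ :=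
    fun T S => if Sum.inr T ∈ S then μ₁ S else 0 with ha
  set b : RecT G U → Finset (V ⊕ RecT G U) → ℝ :=
    fun T S => if Sum.inr T ∈ S then μ₂ S else 0 with hb
  set e : RecT G U → ℝ := fun T => x (Sum.inr T) with he
  have hinrW1 : ∀ T : RecT G U, Sum.inr T ∈ W1s := by
    intro T; rw [hW1s]; exact Finset.mem_union_right _ (Finset.mem_image_of_mem _ (Finset.mem_univ T))
  have hinrW2 : ∀ T : RecT G U, Sum.inr T ∈ W2s := by
    intro T; rw [hW2s]; exact Finset.mem_union_right _ (Finset.mem_image_of_mem _ (Finset.mem_univ T))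
  have ha0 : ∀ T S, 0 ≤ a T S := by
    intro T S; rw [ha]; dsimp only; split
    · exact hμ₁0 S
    · exact le_refl 0
  have hb0 : ∀ T S, 0 ≤ b T S := by
    intro T S; rw [hb]; dsimp only; split
    · exact hμ₂0 S
    · exact le_refl 0
  have hax : ∀ T, ∑ S, a T S = e T := by
    intro T
    rw [he]; dsimp only
    rw [hμ₁x (Sum.inr T) (hinrW1 T)]
    refine Finset.sum_congr rfl fun S _ => ?_
    rw [ha]; dsimp only
    by_cases h : Sum.inr T ∈ S <;> simp [h]
  have hbx : ∀ T, ∑ S, b T S = e T := by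
    intro T
    rw [he]; dsimp only
    rw [hμ₂x (Sum.inr T) (hinrW2 T)]
    refine Finset.sum_congr rfl fun S _ => ?_
    rw [hb]; dsimp only
    by_cases h : Sum.inr T ∈ S <;> simp [h]
  have hae : ∀ T, e T = 0 → ∀ S, a T S = 0 := by
    intro T hT S
    have h0 : ∑ S, a T S = 0 := by rw [hax T, hT]
    exact (Finset.sum_eq_zero_iff_of_nonneg (fun S _ => ha0 T S)).1 h0 S (Finset.mem_univ S)
  have hbe : ∀ T, e T = 0 → ∀ S, b T S = 0 := by
    intro T hT S
    have h0 : ∑ S, b T S = 0 := by rw [hbx T, hT]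
    exact (Finset.sum_eq_zero_iff_of_nonneg (fun S _ => hb0 T S)).1 h0 S (Finset.mem_univ S)
  have hrec₁ : ∀ S, μ₁ S ≠ 0 → ∃ T : RecT G U, Sum.inr T ∈ S ∧
      (∀ T', Sum.inr T' ∈ S → T' = T) ∧ ∀ v ∈ U, (Sum.inl v ∈ S ↔ v ∈ T.1) := by
    intro S hS
    obtain ⟨-, hst, hme⟩ := hμ₁g S hS
    exact good_structure S hst (fun L hL => hme L (Or.inr hL))
  have hrec₂ : ∀ S, μ₂ S ≠ 0 → ∃ T : RecT G U, Sum.inr T ∈ S ∧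
      (∀ T', Sum.inr T' ∈ S → T' = T) ∧ ∀ v ∈ U, (Sum.inl v ∈ S ↔ v ∈ T.1) := by
    intro S hS
    obtain ⟨-, hst, hme⟩ := hμ₂g S hS
    exact good_structure S hst (fun L hL => hme L (Or.inr hL))
  have hsaT : ∀ S, ∑ T, a T S = μ₁ S := by
    intro S
    by_cases hS : μ₁ S = 0
    · rw [hS]
      refine Finset.sum_eq_zero fun T _ => ?_
      rw [ha]; dsimp only
      rw [hS]; simp
    · obtain ⟨T₀, hT₀, huq, -⟩ := hrec₁ S hS
      rw [Finset.sum_eq_single T₀]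
      · rw [ha]; dsimp only; rw [if_pos hT₀]
      · intro T' _ hne
        rw [ha]; dsimp only
        rw [if_neg]
        intro h
        exact hne (huq T' h)
      · intro h
        exact absurd (Finset.mem_univ T₀) h
  have hsbT : ∀ S, ∑ T, b T S = μ₂ S := by
    intro S
    by_cases hS : μ₂ S = 0
    · rw [hS]
      refine Finset.sum_eq_zero fun T _ => ?_
      rw [hb]; dsimp only
      rw [hS]; simp
    · obtain ⟨T₀, hT₀, huq, -⟩ := hrec₂ S hS
      rw [Finset.sum_eq_single T₀]
      · rw [hb]; dsimp only; rw [if_pos hT₀]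
      · intro T' _ hne
        rw [hb]; dsimp only
        rw [if_neg]
        intro h
        exact hne (huq T' h)
      · intro h
        exact absurd (Finset.mem_univ T₀) h
  have hsum_e : ∑ T, e T = 1 := by
    calc ∑ T, e T = ∑ T, ∑ S, a T S := Finset.sum_congr rfl fun T _ => (hax T).symm
      _ = ∑ S : Finset (V ⊕ RecT G U), ∑ T, a T S := Finset.sum_comm
      _ = ∑ S, μ₁ S := Finset.sum_congr rfl fun S _ => hsaT S
      _ = 1 := hμ₁1
  -- the glued combination
  set wt : (RecT G U × Finset (V ⊕ RecT G U) × Finset (V ⊕ RecT G U)) → ℝ := fun p => a p.1 p.2.1 * b p.1 p.2.2 / e p.1 with hwt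
  set f : (RecT G U × Finset (V ⊕ RecT G U) × Finset (V ⊕ RecT G U)) → ((V ⊕ RecT G U) → ℝ) :=
    fun p => fun w => if w ∈ p.2.1 ∪ p.2.2 then (1:ℝ) else 0 with hf
  have hfacts : ∀ p : (RecT G U × Finset (V ⊕ RecT G U) × Finset (V ⊕ RecT G U)), wt p ≠ 0 →
      Sum.inr p.1 ∈ p.2.1 ∧ μ₁ p.2.1 ≠ 0 ∧ Sum.inr p.1 ∈ p.2.2 ∧ μ₂ p.2.2 ≠ 0 := by
    intro p hp
    rw [hwt] at hp; dsimp only at hp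
    have ha' : a p.1 p.2.1 ≠ 0 := by
      intro h; rw [h] at hp; simp at hp
    have hb' : b p.1 p.2.2 ≠ 0 := by
      intro h; rw [h] at hp; simp at hp
    rw [ha] at ha'; dsimp only at ha'
    rw [hb] at hb'; dsimp only at hb'
    by_cases h1 : Sum.inr p.1 ∈ p.2.1
    · by_cases h2 : Sum.inr p.1 ∈ p.2.2
      · rw [if_pos h1] at ha'; rw [if_pos h2] at hb'
        exact ⟨h1, ha', h2, hb'⟩
      · rw [if_neg h2] at hb'; exact absurd rfl hb'
    · rw [if_neg h1] at ha'; exact absurd rfl ha'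
  have hstr : ∀ p : (RecT G U × Finset (V ⊕ RecT G U) × Finset (V ⊕ RecT G U)), wt p ≠ 0 →
      p.2.1 ⊆ W1s ∧ p.2.2 ⊆ W2s ∧
      IsStable (recordGraph G U) p.2.1 ∧ IsStable (recordGraph G U) p.2.2 ∧
      (∀ L ∈ ℒ₁ ∪ recordCliques G U, (p.2.1 ∩ L).Nonempty) ∧
      (∀ L ∈ ℒ₂ ∪ recordCliques G U, (p.2.2 ∩ L).Nonempty) ∧
      Sum.inr p.1 ∈ p.2.1 ∧ Sum.inr p.1 ∈ p.2.2 ∧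
      (∀ T', Sum.inr T' ∈ p.2.1 → T' = p.1) ∧ (∀ T', Sum.inr T' ∈ p.2.2 → T' = p.1) ∧
      (∀ v ∈ U, (Sum.inl v ∈ p.2.1 ↔ v ∈ p.1.1)) ∧
      (∀ v ∈ U, (Sum.inl v ∈ p.2.2 ↔ v ∈ p.1.1)) := by
    intro p hp
    obtain ⟨hm1, hn1, hm2, hn2⟩ := hfacts p hp
    obtain ⟨hsub1, hst1, hme1⟩ := hμ₁g _ hn1
    obtain ⟨hsub2, hst2, hme2⟩ := hμ₂g _ hn2
    obtain ⟨T₁, hT₁, huq₁, hU₁⟩ := hrec₁ _ hn1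
    obtain ⟨T₂, hT₂, huq₂, hU₂⟩ := hrec₂ _ hn2
    have he₁ : p.1 = T₁ := huq₁ _ hm1
    have he₂ : p.1 = T₂ := huq₂ _ hm2
    subst he₁
    refine ⟨hsub1, hsub2, hst1, hst2, hme1, hme2, hm1, hm2,
      fun T' h => huq₁ T' h, fun T' h => (huq₂ T' h).trans he₂.symm, hU₁, ?_⟩
    intro v hv
    rw [he₂]
    exact hU₂ v hv
  have hmeminl1 : ∀ u : V, (Sum.inl u : (V ⊕ RecT G U)) ∈ W1s ↔ u ∈ V₁ ∪ U := by
    intro u; rw [hW1s]; simp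
  have hmeminl2 : ∀ u : V, (Sum.inl u : (V ⊕ RecT G U)) ∈ W2s ↔ u ∈ V₂ ∪ U := by
    intro u; rw [hW2s]; simp
  -- coordinate computations
  have main₁ : ∀ w : (V ⊕ RecT G U), w ∈ W1s →
      (∀ p : (RecT G U × Finset (V ⊕ RecT G U) × Finset (V ⊕ RecT G U)), wt p ≠ 0 → ((w ∈ p.2.1 ∪ p.2.2) ↔ w ∈ p.2.1)) →
      (∑ p : (RecT G U × Finset (V ⊕ RecT G U) × Finset (V ⊕ RecT G U)), wt p * (if w ∈ p.2.1 ∪ p.2.2 then (1:ℝ) else 0)) = x w := by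
    intro w hw hcons
    calc ∑ p : (RecT G U × Finset (V ⊕ RecT G U) × Finset (V ⊕ RecT G U)), wt p * (if w ∈ p.2.1 ∪ p.2.2 then (1:ℝ) else 0)
        = ∑ p : (RecT G U × Finset (V ⊕ RecT G U) × Finset (V ⊕ RecT G U)), wt p * (if w ∈ p.2.1 then (1:ℝ) else 0) := by
          refine Finset.sum_congr rfl fun p _ => ?_
          by_cases hp : wt p = 0
          · rw [hp, zero_mul, zero_mul]
          · rw [if_congr (hcons p hp) rfl rfl]
      _ = ∑ T, ∑ S₁, ∑ S₂ : Finset (V ⊕ RecT G U),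
            a T S₁ * b T S₂ / e T * (if w ∈ S₁ then (1:ℝ) else 0) := by
          simp only [hwt]
          rw [Fintype.sum_prod_type]
          refine Finset.sum_congr rfl fun T _ => ?_
          rw [Fintype.sum_prod_type]
      _ = x w := by
          refine glue_coord a b e μ₁ (x w) (fun S => if w ∈ S then (1:ℝ) else 0)
            hbx hae (fun S => ?_) (hμ₁x w hw).symm
          rw [← Finset.sum_mul, hsaT S]
  have main₂ : ∀ w : (V ⊕ RecT G U), w ∈ W2s →
      (∀ p : (RecT G U × Finset (V ⊕ RecT G U) × Finset (V ⊕ RecT G U)), wt p ≠ 0 → ((w ∈ p.2.1 ∪ p.2.2) ↔ w ∈ p.2.2)) →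
      (∑ p : (RecT G U × Finset (V ⊕ RecT G U) × Finset (V ⊕ RecT G U)), wt p * (if w ∈ p.2.1 ∪ p.2.2 then (1:ℝ) else 0)) = x w := by
    intro w hw hcons
    calc ∑ p : (RecT G U × Finset (V ⊕ RecT G U) × Finset (V ⊕ RecT G U)), wt p * (if w ∈ p.2.1 ∪ p.2.2 then (1:ℝ) else 0)
        = ∑ p : (RecT G U × Finset (V ⊕ RecT G U) × Finset (V ⊕ RecT G U)), wt p * (if w ∈ p.2.2 then (1:ℝ) else 0) := by
          refine Finset.sum_congr rfl fun p _ => ?_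
          by_cases hp : wt p = 0
          · rw [hp, zero_mul, zero_mul]
          · rw [if_congr (hcons p hp) rfl rfl]
      _ = ∑ T, ∑ S₂, ∑ S₁ : Finset (V ⊕ RecT G U),
            b T S₂ * a T S₁ / e T * (if w ∈ S₂ then (1:ℝ) else 0) := by
          simp only [hwt]
          rw [Fintype.sum_prod_type]
          refine Finset.sum_congr rfl fun T _ => ?_
          rw [Fintype.sum_prod_type, Finset.sum_comm]
          refine Finset.sum_congr rfl fun S₂ _ => Finset.sum_congr rfl fun S₁ _ => by ring
      _ = x w := by
          refine glue_coord b a e μ₂ (x w) (fun S => if w ∈ S then (1:ℝ) else 0)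
            hax hbe (fun S => ?_) (hμ₂x w hw).symm
          rw [← Finset.sum_mul, hsbT S]
  have hxeq : x = ∑ p : (RecT G U × Finset (V ⊕ RecT G U) × Finset (V ⊕ RecT G U)), wt p • f p := by
    funext w
    rw [Finset.sum_apply]
    simp only [Pi.smul_apply, smul_eq_mul]
    rw [hf]; dsimp only
    rcases w with v | T
    · have hv : v ∈ V₁ ∪ U ∪ V₂ := by rw [hpart]; exact Finset.mem_univ v
      rcases Finset.mem_union.1 hv with hv' | hv2
      · rcases Finset.mem_union.1 hv' with hv1 | hvU
        · -- v ∈ V₁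
          refine (main₁ (Sum.inl v) ((hmeminl1 v).2 (Finset.mem_union_left _ hv1)) ?_).symm
          intro p hp
          obtain ⟨-, hsub2, -, -, -, -, -, -, -, -, -, -⟩ := hstr p hp
          constructor
          · intro h
            rcases Finset.mem_union.1 h with h | h
            · exact h
            · exfalso
              have := (hmeminl2 v).1 (hsub2 h)
              rcases Finset.mem_union.1 this with h2 | h2
              · exact (Finset.disjoint_left.1 hd₂) hv1 h2
              · exact (Finset.disjoint_left.1 hd₁) hv1 h2
          · exact Finset.mem_union_left _
        · -- v ∈ U
          refine (main₁ (Sum.inl v) ((hmeminl1 v).2 (Finset.mem_union_right _ hvU)) ?_).symm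
          intro p hp
          obtain ⟨-, -, -, -, -, -, -, -, -, -, hU₁, hU₂⟩ := hstr p hp
          constructor
          · intro h
            rcases Finset.mem_union.1 h with h | h
            · exact h
            · exact (hU₁ v hvU).2 ((hU₂ v hvU).1 h)
          · exact Finset.mem_union_left _
      · -- v ∈ V₂
        refine (main₂ (Sum.inl v) ((hmeminl2 v).2 (Finset.mem_union_left _ hv2)) ?_).symm
        intro p hp
        obtain ⟨hsub1, -, -, -, -, -, -, -, -, -, -, -⟩ := hstr p hp
        constructor
        · intro h
          rcases Finset.mem_union.1 h with h | h
          · exfalso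
            have := (hmeminl1 v).1 (hsub1 h)
            rcases Finset.mem_union.1 this with h2 | h2
            · exact (Finset.disjoint_left.1 hd₂) h2 hv2
            · exact (Finset.disjoint_left.1 hd₃) h2 hv2
          · exact h
        · exact Finset.mem_union_right _
    · -- record vertex
      refine (main₁ (Sum.inr T) (hinrW1 T) ?_).symm
      intro p hp
      obtain ⟨-, -, -, -, -, -, hm1, -, -, huq₂, -, -⟩ := hstr p hp
      constructor
      · intro h
        rcases Finset.mem_union.1 h with h | h
        · exact h
        · rw [huq₂ T h]
          exact hm1
      · exact Finset.mem_union_left _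
  rw [hxeq]
  refine comb_mem_convexHull Finset.univ wt f _ (fun p _ => ?_) ?_ (fun p _ hp => ?_)
  · -- nonneg
    rw [hwt]; dsimp only
    have he0 : 0 ≤ e p.1 := by
      rw [← hax p.1]
      exact Finset.sum_nonneg fun S _ => ha0 _ S
    exact div_nonneg (mul_nonneg (ha0 _ _) (hb0 _ _)) he0
  · -- total mass
    calc ∑ p : (RecT G U × Finset (V ⊕ RecT G U) × Finset (V ⊕ RecT G U)), wt p
        = ∑ T, ∑ S₁, ∑ S₂ : Finset (V ⊕ RecT G U), a T S₁ * b T S₂ / e T := by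
          simp only [hwt]
          rw [Fintype.sum_prod_type]
          refine Finset.sum_congr rfl fun T _ => ?_
          rw [Fintype.sum_prod_type]
      _ = ∑ T, ∑ S₁, a T S₁ := glue_calc a b e hbx hae
      _ = ∑ T, e T := Finset.sum_congr rfl fun T _ => hax T
      _ = 1 := hsum_e
  · -- membership in generator set
    obtain ⟨hsub1, hsub2, hst1, hst2, hme1, hme2, hm1, hm2, huq₁, huq₂, hU₁, hU₂⟩ := hstr p hp
    have hcross : ∀ c ∈ p.2.1, ∀ d ∈ p.2.2, ¬ (recordGraph G U).Adj c d := by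
      intro c hc d hd
      rcases c with u | Tc
      · rcases d with v | Td
        · have hu : u ∈ V₁ ∪ U := (hmeminl1 u).1 (hsub1 hc)
          have hv : v ∈ V₂ ∪ U := (hmeminl2 v).1 (hsub2 hd)
          by_cases hvU : v ∈ U
          · have : Sum.inl v ∈ p.2.1 := (hU₁ v hvU).2 ((hU₂ v hvU).1 hd)
            exact hst1 _ hc _ this
          · have hvV₂ : v ∈ V₂ := by
              rcases Finset.mem_union.1 hv with h | h
              · exact h
              · exact absurd h hvU
            by_cases huU : u ∈ U
            · have : Sum.inl u ∈ p.2.2 := (hU₂ u huU).2 ((hU₁ u huU).1 hc)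
              exact hst2 _ this _ hd
            · have huV₁ : u ∈ V₁ := by
                rcases Finset.mem_union.1 hu with h | h
                · exact h
                · exact absurd h huU
              intro hadj
              exact hnonadj u huV₁ v hvV₂ (adj_inl_inl.1 hadj)
        · have hTd : Td = p.1 := huq₂ _ hd
          subst hTd
          exact hst1 _ hc _ hm1
      · have hTc : Tc = p.1 := huq₁ _ hc
        subst hTc
        rcases d with v | Td
        · intro hadj
          exact hst2 _ hm2 _ hd hadj
        · have hTd : Td = p.1 := huq₂ _ hd
          subst hTd
          exact (recordGraph G U).irrefl
    have hstU : IsStable (recordGraph G U) (p.2.1 ∪ p.2.2) := by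
      intro c hc d hd
      rcases Finset.mem_union.1 hc with hc' | hc' <;> rcases Finset.mem_union.1 hd with hd' | hd'
      · exact hst1 c hc' d hd'
      · exact hcross c hc' d hd'
      · intro hadj
        exact hcross d hd' c hc' hadj.symm
      · exact hst2 c hc' d hd'
    have hmeetU : ∀ L ∈ ℒ₁ ∪ ℒ₂ ∪ recordCliques G U, ∃ c, c ∈ p.2.1 ∪ p.2.2 ∧ c ∈ L := by
      intro L hL
      rcases hL with hL | hL
      · rcases hL with hL | hL
        · obtain ⟨c, hc⟩ := hme1 L (Or.inl hL)
          rw [Finset.mem_inter] at hc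
          exact ⟨c, Finset.mem_union_left _ hc.1, hc.2⟩
        · obtain ⟨c, hc⟩ := hme2 L (Or.inl hL)
          rw [Finset.mem_inter] at hc
          exact ⟨c, Finset.mem_union_right _ hc.1, hc.2⟩
      · obtain ⟨c, hc⟩ := hme1 L (Or.inr hL)
        rw [Finset.mem_inter] at hc
        exact ⟨c, Finset.mem_union_left _ hc.1, hc.2⟩
    refine ⟨p.2.1 ∪ p.2.2, hstU, ?_, ?_⟩
    · intro L hL
      exact (finset_inter_nonempty_iff _ _ _).2 (hmeetU L hL)
    · rw [hf]; dsimp only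
      funext w
      by_cases h : w ∈ p.2.1 ∪ p.2.2 <;> simp [h]
/-- for a node cutset separation `(V₁, U, V₂)` and collections of
cliques `ℒ₁` of `G₁ = G[V₁ ∪ U]`, `ℒ₂` of `G₂ = G[V₂ ∪ U]`, a vector lies in
`STAB(G(U), ℒ₁ ∪ ℒ₂ ∪ ℒ(U))` iff its restrictions to `G₁(U)` and `G₂(U)` lie in
`STAB(G₁(U), ℒ₁ ∪ ℒ(U))` and `STAB(G₂(U), ℒ₂ ∪ ℒ(U))` respectively. -/
theorem stmt12 (G : SimpleGraph V) (V₁ U V₂ : Finset V)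
    (hpart : V₁ ∪ U ∪ V₂ = Finset.univ)
    (hd₁ : Disjoint V₁ U) (hd₂ : Disjoint V₁ V₂) (hd₃ : Disjoint U V₂)
    (hnonadj : ∀ a ∈ V₁, ∀ b ∈ V₂, ¬ G.Adj a b) (hV₂ : V₂.Nonempty)
    (ℒ₁ ℒ₂ : Set (Finset (V ⊕ RecT G U)))
    (hℒ₁ : ∀ L ∈ ℒ₁, L ⊆ (V₁ ∪ U).image Sum.inl ∧ (recordGraph G U).IsClique (↑L : Set (V ⊕ RecT G U)))
    (hℒ₂ : ∀ L ∈ ℒ₂, L ⊆ (V₂ ∪ U).image Sum.inl ∧ (recordGraph G U).IsClique (↑L : Set (V ⊕ RecT G U)))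
    (x : (V ⊕ RecT G U) → ℝ) :
    x ∈ stabL (recordGraph G U) (ℒ₁ ∪ ℒ₂ ∪ recordCliques G U) ↔
      (MemStabOn (recordGraph G U)
        ((V₁ ∪ U).image Sum.inl ∪ (Finset.univ : Finset (RecT G U)).image Sum.inr)
        (ℒ₁ ∪ recordCliques G U) x ∧
       MemStabOn (recordGraph G U)
        ((V₂ ∪ U).image Sum.inl ∪ (Finset.univ : Finset (RecT G U)).image Sum.inr)
        (ℒ₂ ∪ recordCliques G U) x) := by
  constructor
  · intro hx
    exact ⟨forward_side G U (V₁ ∪ U) ℒ₁ (ℒ₁ ∪ ℒ₂) (fun L hL => Or.inl hL)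
        (fun L hL => (hℒ₁ L hL).1) Finset.subset_union_right x hx,
      forward_side G U (V₂ ∪ U) ℒ₂ (ℒ₁ ∪ ℒ₂) (fun L hL => Or.inr hL)
        (fun L hL => (hℒ₂ L hL).1) Finset.subset_union_right x hx⟩
  · rintro ⟨h1, h2⟩
    rw [memStabOn_iff] at h1 h2
    obtain ⟨μ₁, hμ₁0, hμ₁g, hμ₁1, hμ₁x⟩ := h1
    obtain ⟨μ₂, hμ₂0, hμ₂g, hμ₂1, hμ₂x⟩ := h2
    exact backward_glue G V₁ U V₂ hpart hd₁ hd₂ hd₃ hnonadj ℒ₁ ℒ₂ x μ₁ μ₂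
      hμ₁0 hμ₂0 hμ₁g hμ₂g hμ₁1 hμ₂1 hμ₁x hμ₂x
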